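/- The graph T_{000}, obtained by taking three disjoint copies of L_0 (where L_0 is K_{3,3} with one edge subdivided by a new vertex) and adding a new vertex adjacent to the three degree-2 vertices, admits a 3-bisection whose two induced monochromatic subgraphs are isomorphic. -/

import Mathlib

open SimpleGraph

/-- Every connected component of the subgraph of `G` induced on `s` has at most `k` vertices. -/
def SmallComponents {V : Type*} (G : SimpleGraph V) (s : Set V) (k : ℕ) : Prop :=
  ∀ c : (G.induce s).ConnectedComponent, c.supp.ncard ≤ k

/-- A `k`-bisection: the two colour classes `B` and `Bᶜ` have the same cardinality and
every monochromatic component has at most `k` vertices. -/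
def IsKBisection {V : Type*} [Fintype V] (G : SimpleGraph V) (k : ℕ) (B : Set V) : Prop :=
  2 * B.ncard = Fintype.card V ∧ SmallComponents G B k ∧ SmallComponents G Bᶜ k

/-- A linear forest: an acyclic graph with all degrees at most 2,
i.e. every connected component is a path. -/
def IsLinearForest {V : Type*} (G : SimpleGraph V) : Prop :=
  G.IsAcyclic ∧ ∀ v : V, (G.neighborSet v).ncard ≤ 2

/-- `L₀`: the complete bipartite graph `K_{3,3}` on parts `{0,1,2}`, `{3,4,5}` with the edge
`2‒5` subdivided by the new vertex `6`. -/
def L0 : SimpleGraph (Fin 7) :=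
  SimpleGraph.fromRel (fun i j =>
    (i.val < 3 ∧ 3 ≤ j.val ∧ j.val < 6 ∧ ¬(i.val = 2 ∧ j.val = 5)) ∨
    (i.val = 2 ∧ j.val = 6) ∨ (i.val = 6 ∧ j.val = 5))

/-- `T₀₀₀`: three disjoint copies of `L₀` together with one extra vertex joined to the
degree-2 vertex (the subdivision vertex `6`) of each copy. -/
def T000 : SimpleGraph ((Fin 3 × Fin 7) ⊕ Unit) :=
  SimpleGraph.fromRel (fun a b =>
    match a, b with
    | .inl (c, i), .inl (c', j) => c = c' ∧ L0.Adj i j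
    | .inl (_, i), .inr _ => i = 6
    | _, _ => False)

/- ------------ auxiliary material ------------- -/

abbrev V22 := (Fin 3 × Fin 7) ⊕ Unit

instance : DecidableRel L0.Adj := fun a b =>
  inferInstanceAs (Decidable (a ≠ b ∧
    (((a.val < 3 ∧ 3 ≤ b.val ∧ b.val < 6 ∧ ¬(a.val = 2 ∧ b.val = 5)) ∨
      (a.val = 2 ∧ b.val = 6) ∨ (a.val = 6 ∧ b.val = 5)) ∨
     ((b.val < 3 ∧ 3 ≤ a.val ∧ a.val < 6 ∧ ¬(b.val = 2 ∧ a.val = 5)) ∨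
      (b.val = 2 ∧ a.val = 6) ∨ (b.val = 6 ∧ a.val = 5)))))

instance : DecidableRel T000.Adj := fun a b =>
  match a, b with
  | .inl (c, i), .inl (c', j) =>
      inferInstanceAs (Decidable ((Sum.inl (c, i) : V22) ≠ Sum.inl (c', j) ∧
        ((c = c' ∧ L0.Adj i j) ∨ (c' = c ∧ L0.Adj j i))))
  | .inl (c, i), .inr u =>
      inferInstanceAs (Decidable ((Sum.inl (c, i) : V22) ≠ Sum.inr u ∧ (i = 6 ∨ False)))
  | .inr u, .inl (c, j) =>
      inferInstanceAs (Decidable ((Sum.inr u : V22) ≠ Sum.inl (c, j) ∧ (False ∨ j = 6)))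
  | .inr u, .inr u' =>
      inferInstanceAs (Decidable ((Sum.inr u : V22) ≠ Sum.inr u' ∧ (False ∨ False)))

/-- the colour class -/
def btbl : Fin 3 → Fin 7 → Bool :=
  ![![true, true, true, false, false, false, true],
    ![true, true, true, false, false, false, false],
    ![false, false, true, false, true, true, false]]

def bpred : V22 → Bool
  | .inl (c, i) => btbl c i
  | .inr _ => true

def Bset : Set V22 := {x | bpred x}

instance : DecidablePred (· ∈ Bset) := fun x => inferInstanceAs (Decidable (bpred x = true))

instance : DecidablePred (· ∈ Bsetᶜ) := fun x => inferInstanceAs (Decidable (x ∉ Bset))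

instance : DecidableRel (T000.induce Bset).Adj := fun a b =>
  inferInstanceAs (Decidable (T000.Adj a.1 b.1))

instance : DecidableRel (T000.induce Bsetᶜ).Adj := fun a b =>
  inferInstanceAs (Decidable (T000.Adj a.1 b.1))

/-- the involution swapping the two classes -/
def ptbl : Fin 3 → Fin 7 → V22 :=
  ![![.inl (2,6), .inl (1,4), .inl (2,1), .inl (2,5), .inl (1,2), .inl (1,1), .inl (2,3)],
    ![.inl (1,3), .inl (0,5), .inl (0,4), .inl (1,0), .inl (0,1), .inl (2,2), .inl (2,4)],
    ![.inr (), .inl (0,2), .inl (1,5), .inl (0,6), .inl (1,6), .inl (0,3), .inl (0,0)]]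

def piF : V22 → V22
  | .inl (c, i) => ptbl c i
  | .inr _ => .inl (2, 0)

lemma walk_mem {W : Type*} {H : SimpleGraph W} {S : Set W}
    (hcl : ∀ a b, a ∈ S → H.Adj a b → b ∈ S) :
    ∀ {u v : W}, H.Walk u v → u ∈ S → v ∈ S := by
  intro u v w
  induction w with
  | nil => exact id
  | cons h _ ih => exact fun hu => ih (hcl _ _ hu h)

lemma comp_small {W : Type*} [Fintype W] (H : SimpleGraph W) (k : ℕ) (S : W → Set W)
    (hmem : ∀ v, v ∈ S v) (hcl : ∀ v a b, a ∈ S v → H.Adj a b → b ∈ S v)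
    (hcard : ∀ v, (S v).ncard ≤ k) :
    ∀ c : H.ConnectedComponent, c.supp.ncard ≤ k := by
  intro c
  induction c using SimpleGraph.ConnectedComponent.ind with
  | _ v =>
    have hsub : (H.connectedComponentMk v).supp ⊆ S v := by
      intro u hu
      rw [SimpleGraph.ConnectedComponent.mem_supp_iff] at hu
      obtain ⟨w⟩ := ((SimpleGraph.ConnectedComponent.eq.mp hu)).symm
      exact walk_mem (hcl v) w (hmem v)
    exact le_trans (Set.ncard_le_ncard hsub (S v).toFinite) (hcard v)

/-- radius-2 ball -/
def ball {W : Type*} (H : SimpleGraph W) (v : W) : Set W :=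
  {u | u = v ∨ H.Adj v u ∨ ∃ w, H.Adj v w ∧ H.Adj w u}

instance {W : Type*} [DecidableEq W] [Fintype W] (H : SimpleGraph W) [DecidableRel H.Adj]
    (v : W) : DecidablePred (· ∈ _root_.ball H v) := fun u =>
  inferInstanceAs (Decidable (u = v ∨ H.Adj v u ∨ ∃ w, H.Adj v w ∧ H.Adj w u))

lemma small_of_balls {W : Type*} [Fintype W] (H : SimpleGraph W)
    (hcl : ∀ v a b, a ∈ _root_.ball H v → H.Adj a b → b ∈ _root_.ball H v)
    (hcard : ∀ v, (_root_.ball H v).ncard ≤ 3) :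
    ∀ c : H.ConnectedComponent, c.supp.ncard ≤ 3 :=
  comp_small H 3 (ball H) (fun _ => Or.inl rfl) hcl hcard

set_option synthInstance.maxSize 2000
set_option synthInstance.maxHeartbeats 2000000
set_option maxHeartbeats 4000000

/-- `T₀₀₀` admits a 3-bisection whose two induced monochromatic subgraphs are isomorphic. -/
theorem stmt17 : ∃ B : Set ((Fin 3 × Fin 7) ⊕ Unit),
    IsKBisection T000 3 B ∧ Nonempty (T000.induce B ≃g T000.induce Bᶜ) := by
  refine ⟨Bset, ⟨?_, ?_, ?_⟩, ?_⟩
  · rw [Set.ncard_eq_toFinset_card']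
    decide
  · refine small_of_balls (T000.induce Bset) ?_ ?_
    · decide
    · have h : ∀ v, (_root_.ball (T000.induce Bset) v).toFinset.card ≤ 3 := by decide
      intro v
      rw [Set.ncard_eq_toFinset_card']
      exact h v
  · refine small_of_balls (T000.induce Bsetᶜ) ?_ ?_
    · decide
    · have h : ∀ v, (_root_.ball (T000.induce Bsetᶜ) v).toFinset.card ≤ 3 := by decide
      intro v
      rw [Set.ncard_eq_toFinset_card']
      exact h v
  · have hinv : ∀ x, piF (piF x) = x := by decide
    have hB : ∀ x, x ∈ Bset → piF x ∈ Bsetᶜ := by decide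
    have hC : ∀ x, x ∈ Bsetᶜ → piF x ∈ Bset := by decide
    have hadj : ∀ x y, x ∈ Bset → y ∈ Bset →
        (T000.Adj (piF x) (piF y) ↔ T000.Adj x y) := by decide
    refine ⟨⟨⟨fun x => ⟨piF x.1, hB x.1 x.2⟩, fun x => ⟨piF x.1, hC x.1 x.2⟩,
      fun x => Subtype.ext (hinv x.1), fun x => Subtype.ext (hinv x.1)⟩, ?_⟩⟩
    intro a b
    exact hadj a.1 b.1 a.2 b.2
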